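/- arXiv:2507.22778 — 2 statements merged into one kernel-verified Lean document; each statement's English description precedes it below -/
import Mathlib

section
/- Let J be a real square matrix such that J + Jᵀ is negative definite, and let X ≻ 0 be the unique symmetric solution of the Lyapunov equation Jᵀ X + X J = -I. Then λ_max(X) ≤ 1 / |λ_max(J + Jᵀ)|. -/
open Matrix


/-- If `J + Jᵀ` is negative definite and `X ≻ 0` solves the Lyapunov equation
`Jᵀ X + X J = -I`, then `λ_max X ≤ 1 / |λ_max (J + Jᵀ)|`. -/
theorem stmt_1 {n : ℕ} [NeZero n] (J X : Matrix (Fin n) (Fin n) ℝ)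
    (hH : (J + J.transpose).IsHermitian)
    (hneg : (-(J + J.transpose)).PosDef)
    (hX : X.PosDef)
    (hlyap : J.transpose * X + X * J = -1) :
    (⨆ i, hX.1.eigenvalues i) ≤ 1 / |⨆ i, hH.eigenvalues i| := by
  have hn : Nonempty (Fin n) := Fin.pos_iff_nonempty.mp (Nat.pos_of_ne_zero (NeZero.ne n))
  set A := J + J.transpose with hAdef
  obtain ⟨i₀, hi₀⟩ := exists_eq_ciSup_of_finite (f := hX.1.eigenvalues)
  obtain ⟨i₁, hi₁⟩ := exists_eq_ciSup_of_finite (f := hH.eigenvalues)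
  set lam := hX.1.eigenvalues i₀ with hlamdef
  set mu := hH.eigenvalues i₁ with hmudef
  have hlam_pos : 0 < lam := hX.eigenvalues_pos i₀
  set v : Fin n → ℝ := ⇑(hX.1.eigenvectorBasis i₀) with hvdef
  have hv : X *ᵥ v = lam • v := hX.1.mulVec_eigenvectorBasis i₀
  have hvnorm : v ⬝ᵥ v = 1 := by
    have h1 : ‖hX.1.eigenvectorBasis i₀‖ = 1 := hX.1.eigenvectorBasis.orthonormal.1 i₀
    have h2 : (inner ℝ (hX.1.eigenvectorBasis i₀) (hX.1.eigenvectorBasis i₀) : ℝ) = 1 := by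
      rw [real_inner_self_eq_norm_sq, h1]; norm_num
    rw [← h2, EuclideanSpace.inner_eq_star_dotProduct]
    simp only [star_trivial, dotProduct]; rfl
  set u : Fin n → ℝ := ⇑(hH.eigenvectorBasis i₁) with hudef
  have hu : A *ᵥ u = mu • u := hH.mulVec_eigenvectorBasis i₁
  have hunorm : u ⬝ᵥ u = 1 := by
    have h1 : ‖hH.eigenvectorBasis i₁‖ = 1 := hH.eigenvectorBasis.orthonormal.1 i₁
    have h2 : (inner ℝ (hH.eigenvectorBasis i₁) (hH.eigenvectorBasis i₁) : ℝ) = 1 := by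
      rw [real_inner_self_eq_norm_sq, h1]; norm_num
    rw [← h2, EuclideanSpace.inner_eq_star_dotProduct]
    simp only [star_trivial, dotProduct]; rfl
  have hu_ne : u ≠ 0 := fun h => hH.eigenvectorBasis.orthonormal.ne_zero i₁ ((WithLp.ofLp_eq_zero (p := 2)).mp h)
  -- mu < 0
  have hmu_neg : mu < 0 := by
    have := hneg.dotProduct_mulVec_pos hu_ne
    simp only [Matrix.neg_mulVec, dotProduct_neg, hu, dotProduct_smul,
      star_trivial, smul_eq_mul, hunorm, mul_one] at this
    simpa using this
  -- Rayleigh bound: v ⬝ᵥ (A *ᵥ v) ≤ mu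
  set q := v ⬝ᵥ (A *ᵥ v) with hqdef
  have hq_le : q ≤ mu := by
    have hPSD : ((mu • 1 - A : Matrix (Fin n) (Fin n) ℝ)).PosSemidef := by
      have hdiag : ((Matrix.diagonal (fun j => mu - hH.eigenvalues j) :
          Matrix (Fin n) (Fin n) ℝ)).PosSemidef := by
        apply Matrix.PosSemidef.diagonal
        intro j
        have : hH.eigenvalues j ≤ mu := hi₁ ▸ le_ciSup (Set.Finite.bddAbove (Set.finite_range _)) j
        simpa using sub_nonneg.mpr this
      have hU := hH.eigenvectorUnitary
      have hspec := hH.spectral_theorem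
      have key : (mu • 1 - A : Matrix (Fin n) (Fin n) ℝ) =
          (hH.eigenvectorUnitary : Matrix (Fin n) (Fin n) ℝ) *
            Matrix.diagonal (fun j => mu - hH.eigenvalues j) *
            (hH.eigenvectorUnitary : Matrix (Fin n) (Fin n) ℝ)ᴴ := by
        have hUU : (hH.eigenvectorUnitary : Matrix (Fin n) (Fin n) ℝ) *
            star (hH.eigenvectorUnitary : Matrix (Fin n) (Fin n) ℝ) = 1 :=
          Matrix.mem_unitaryGroup_iff.mp hH.eigenvectorUnitary.2
        have h1 : (Matrix.diagonal (fun j => mu - hH.eigenvalues j) :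
            Matrix (Fin n) (Fin n) ℝ) = mu • 1 -
              Matrix.diagonal (RCLike.ofReal ∘ hH.eigenvalues) := by
          rw [Matrix.smul_one_eq_diagonal, ← Matrix.diagonal_sub]
          congr 1
        rw [h1, Matrix.mul_sub, Matrix.sub_mul]
        rw [Matrix.star_eq_conjTranspose] at hUU
        have h2 : (hH.eigenvectorUnitary : Matrix (Fin n) (Fin n) ℝ) * (mu • 1) *
            (hH.eigenvectorUnitary : Matrix (Fin n) (Fin n) ℝ)ᴴ = mu • 1 := by
          rw [Matrix.mul_smul, Matrix.mul_one, Matrix.smul_mul, hUU]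
        rw [h2]
        congr 1
      rw [key]
      exact hdiag.mul_mul_conjTranspose_same _
    have := hPSD.dotProduct_mulVec_nonneg v
    simp only [Matrix.sub_mulVec, Matrix.smul_mulVec, Matrix.one_mulVec,
      dotProduct_sub, dotProduct_smul, star_trivial, smul_eq_mul,
      hvnorm, mul_one] at this
    have : (0:ℝ) ≤ mu - q := by simpa [hqdef] using this
    linarith
  -- lam * q = -1
  have hkey : lam * q = -1 := by
    have h1 : v ⬝ᵥ ((J.transpose * X + X * J) *ᵥ v) = v ⬝ᵥ ((-1 : Matrix (Fin n) (Fin n) ℝ) *ᵥ v) := by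
      rw [hlyap]
    have h2 : v ⬝ᵥ ((-1 : Matrix (Fin n) (Fin n) ℝ) *ᵥ v) = -1 := by
      simp [Matrix.neg_mulVec, hvnorm]
    have h3 : v ⬝ᵥ ((J.transpose * X) *ᵥ v) = lam * (v ⬝ᵥ (J.transpose *ᵥ v)) := by
      rw [← Matrix.mulVec_mulVec, hv, Matrix.mulVec_smul, dotProduct_smul]
      simp
    have h4 : v ⬝ᵥ ((X * J) *ᵥ v) = lam * (v ⬝ᵥ (J *ᵥ v)) := by
      rw [← Matrix.mulVec_mulVec, Matrix.dotProduct_mulVec (v := v) (A := X)]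
      have hXsym : X.transpose = X := hX.1
      rw [← Matrix.mulVec_transpose, hXsym, hv]
      simp [smul_dotProduct]
    have h5 : q = v ⬝ᵥ (J *ᵥ v) + v ⬝ᵥ (J.transpose *ᵥ v) := by
      rw [hqdef, hAdef, Matrix.add_mulVec, dotProduct_add]
    rw [Matrix.add_mulVec, dotProduct_add, h3, h4, h2] at h1
    rw [h5]; ring_nf; ring_nf at h1; linarith
  -- conclude
  rw [← hi₀, ← hi₁, abs_of_neg hmu_neg, le_div_iff₀ (by linarith)]
  nlinarith
end

section
/- Let J be a real square matrix and γ > 0 a scalar. If λ_max(J + Jᵀ) < -2γ and X ≻ 0 solves Jᵀ X + X J = -I, then 1/λ_max(X) - 2γ > 0. -/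
open Matrix

lemma rayleigh_le {n : Type*} [Fintype n] [DecidableEq n] {A : Matrix n n ℝ}
    (hA : A.IsHermitian) (v : n → ℝ) [Nonempty n] :
    v ⬝ᵥ (A *ᵥ v) ≤ (⨆ i, hA.eigenvalues i) * (v ⬝ᵥ v) := by
  classical
  set U : Matrix n n ℝ := (hA.eigenvectorUnitary : Matrix n n ℝ) with hUdef
  have hU1 : star U * U = 1 := (Matrix.mem_unitaryGroup_iff'.mp hA.eigenvectorUnitary.2)
  have hU2 : U * star U = 1 := (Matrix.mem_unitaryGroup_iff.mp hA.eigenvectorUnitary.2)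
  set u : n → ℝ := star U *ᵥ v with hu
  have hAv : v ⬝ᵥ (A *ᵥ v) = ∑ j, hA.eigenvalues j * (u j * u j) := by
    conv_lhs => rw [hA.spectral_theorem, Unitary.conjStarAlgAut_apply]
    simp only [← hUdef, ← mulVec_mulVec]
    rw [dotProduct_mulVec v U, show v ᵥ* U = u by
      rw [hu, Matrix.star_eq_conjTranspose, conjTranspose_eq_transpose_of_trivial,
        mulVec_transpose]]
    simp only [mulVec_diagonal, dotProduct, Function.comp_apply]
    exact Finset.sum_congr rfl fun j _ => by
      rw [← hu]; simp only [RCLike.ofReal_real_eq_id, id]; ring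
  have hvv : v ⬝ᵥ v = ∑ j, u j * u j := by
    have : u ⬝ᵥ u = v ⬝ᵥ v := by
      rw [hu, dotProduct_mulVec, Matrix.star_eq_conjTranspose,
        conjTranspose_eq_transpose_of_trivial, vecMul_transpose, mulVec_mulVec,
        show U * Uᵀ = 1 by rw [← conjTranspose_eq_transpose_of_trivial,
          ← Matrix.star_eq_conjTranspose]; exact hU2, one_mulVec]
    simpa [dotProduct] using this.symm
  rw [hAv, hvv, Finset.mul_sum]
  apply Finset.sum_le_sum
  intro j _
  have h1 : hA.eigenvalues j ≤ ⨆ i, hA.eigenvalues i := le_ciSup (Finite.bddAbove_range _) j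
  nlinarith [mul_self_nonneg (u j)]

/-- If `λ_max (J + Jᵀ) < -2γ` with `γ > 0` and `X ≻ 0` solves `Jᵀ X + X J = -I`,
then `1 / λ_max X - 2γ > 0`. -/
theorem stmt_2 {n : ℕ} [NeZero n] (J X : Matrix (Fin n) (Fin n) ℝ) (γ : ℝ) (hγ : 0 < γ)
    (hH : (J + J.transpose).IsHermitian)
    (hbound : (⨆ i, hH.eigenvalues i) < -2 * γ)
    (hX : X.PosDef)
    (hlyap : J.transpose * X + X * J = -1) :
    0 < 1 / (⨆ i, hX.1.eigenvalues i) - 2 * γ := by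
  classical
  haveI : Nonempty (Fin n) := Fin.pos_iff_nonempty.mp (Nat.pos_of_ne_zero (NeZero.ne n))
  obtain ⟨i0, hi0⟩ := Finite.exists_max hX.1.eigenvalues
  have hμ : (⨆ i, hX.1.eigenvalues i) = hX.1.eigenvalues i0 :=
    le_antisymm (ciSup_le hi0) (le_ciSup (Finite.bddAbove_range _) i0)
  set μ := hX.1.eigenvalues i0 with hμdef
  have hμpos : 0 < μ := hX.eigenvalues_pos i0
  set v : Fin n → ℝ := ⇑(hX.1.eigenvectorBasis i0) with hv
  have hXv : X *ᵥ v = μ • v := hX.1.mulVec_eigenvectorBasis i0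
  have hvv : v ⬝ᵥ v = 1 := by
    have hnorm : ‖hX.1.eigenvectorBasis i0‖ = 1 := hX.1.eigenvectorBasis.orthonormal.1 i0
    have := real_inner_self_eq_norm_sq (hX.1.eigenvectorBasis i0)
    rw [hnorm] at this
    rw [EuclideanSpace.inner_eq_star_dotProduct, one_pow] at this
    simpa [hv] using this
  -- compute v ⬝ᵥ ((Jᵀ X + X J) v) = -1
  have hXsym : Xᵀ = X := by
    have := hX.1
    rwa [Matrix.IsHermitian, conjTranspose_eq_transpose_of_trivial] at this
  have hkey : μ * (v ⬝ᵥ ((J + Jᵀ) *ᵥ v)) = -1 := by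
    have h0 : v ⬝ᵥ ((Jᵀ * X + X * J) *ᵥ v) = -1 := by
      rw [hlyap]; simp [neg_mulVec, one_mulVec, hvv]
    have h1 : v ⬝ᵥ ((Jᵀ * X) *ᵥ v) = μ * (v ⬝ᵥ (Jᵀ *ᵥ v)) := by
      rw [← mulVec_mulVec, hXv, mulVec_smul, dotProduct_smul, smul_eq_mul]
    have h2 : v ⬝ᵥ ((X * J) *ᵥ v) = μ * (v ⬝ᵥ (J *ᵥ v)) := by
      rw [← mulVec_mulVec, dotProduct_mulVec v X, ← mulVec_transpose, hXsym, hXv]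
      simp [smul_dotProduct]
    rw [add_mulVec, dotProduct_add] at h0
    rw [add_mulVec, dotProduct_add]
    rw [h1, h2] at h0
    linarith
  have hray : v ⬝ᵥ ((J + Jᵀ) *ᵥ v) ≤ ⨆ i, hH.eigenvalues i := by
    have := rayleigh_le hH v
    rwa [hvv, mul_one] at this
  have hchain : -1 < μ * (-2 * γ) := by
    calc -1 = μ * (v ⬝ᵥ ((J + Jᵀ) *ᵥ v)) := hkey.symm
    _ ≤ μ * (⨆ i, hH.eigenvalues i) := by
        exact mul_le_mul_of_nonneg_left hray hμpos.le
    _ < μ * (-2 * γ) := by exact (mul_lt_mul_iff_right₀ hμpos).mpr hbound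
  rw [hμ]
  have h2γμ : 2 * γ * μ < 1 := by nlinarith
  have : 2 * γ < 1 / μ := (lt_div_iff₀ hμpos).mpr h2γμ
  linarith
end
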